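/- For every c.e. set B ⊆ ℕ there is a uniformly c.e. sequence (Bₖ)_{k∈ℕ} of pairwise disjoint sets with ⋃ₖ Bₖ = B such that for every c.e. set W and every k: if W ∖ B is not c.e., then W ∖ Bₖ is not c.e. -/

import Mathlib

/-- A set of natural numbers is computably enumerable if it is the domain of a
partial computable function. -/
def CE (A : Set ℕ) : Prop := ∃ f : ℕ →. ℕ, Partrec f ∧ A = f.Dom

/-- A set of natural numbers is computable if its membership predicate is computable. -/
def IsComputableSet (A : Set ℕ) : Prop := ComputablePred (· ∈ A)

/-- `X ⊆* Y` : `X ∖ Y` is finite. -/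
def SubsetStar (X Y : Set ℕ) : Prop := (X \ Y).Finite

/-- `X ⊑ A` : `X` is a split of the c.e. set `A`, i.e. `X` is c.e. and there is a
c.e. set `Y` with `X ∩ Y = ∅` and `X ∪ Y = A`. -/
def Split (A X : Set ℕ) : Prop := CE X ∧ ∃ Y : Set ℕ, CE Y ∧ X ∩ Y = ∅ ∧ X ∪ Y = A

/-- `B ⊂ₛ A` : `B` is a small subset of `A`. -/
def SmallSubset (B A : Set ℕ) : Prop :=
  B ⊆ A ∧ ∀ U V : Set ℕ, CE U → CE V → SubsetStar (U ∩ (A \ B)) V → CE ((U \ A) ∪ V)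

/-- `B ⊂ₘ A` : `B` is a major subset of `A`. -/
def MajorSubset (B A : Set ℕ) : Prop :=
  B ⊆ A ∧ (A \ B).Infinite ∧
    ∀ W : Set ℕ, CE W → A ∪ W = Set.univ → (Set.univ \ (B ∪ W)).Finite

/-- A sequence `(B k)` of subsets of `ℕ` is uniformly c.e. if `{(k, n) : n ∈ B k}`
is c.e. -/
def UniformlyCE (Z : ℕ → Set ℕ) : Prop :=
  ∃ f : ℕ × ℕ →. ℕ, Partrec f ∧ ∀ p : ℕ × ℕ, p.2 ∈ Z p.1 ↔ (f p).Dom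


open Nat.Partrec (Code)
open Nat.Partrec.Code

lemma ce_dom {α} [Primcodable α] {p : α → ℕ → Bool} (hp : Computable₂ p) :
    ∃ f : α →. ℕ, Partrec f ∧ ∀ a, (f a).Dom ↔ ∃ s, p a s = true := by
  refine ⟨fun a => Nat.rfind (fun s => Part.some (p a s)), ?_, fun a => ?_⟩
  · exact Partrec.rfind hp.partrec₂
  · refine (Nat.rfind_dom (p := fun s => Part.some (p a s))).trans ?_
    simp

lemma ce_of_exists {p : ℕ → ℕ → Bool} (hp : Computable₂ p) :
    CE {x | ∃ s, p x s = true} := by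
  obtain ⟨f, hf, hdom⟩ := ce_dom hp
  exact ⟨f, hf, by ext x; simp [hdom, PFun.Dom]⟩

lemma CE_iff_code {A : Set ℕ} : CE A ↔ ∃ c : Code, A = {x | (eval c x).Dom} := by
  constructor
  · rintro ⟨f, hf, rfl⟩
    obtain ⟨c, hc⟩ := exists_code.1 (Partrec.nat_iff.1 hf)
    exact ⟨c, by rw [hc]; rfl⟩
  · rintro ⟨c, rfl⟩
    exact ⟨eval c, Partrec.nat_iff.2 (exists_code.2 ⟨c, rfl⟩), rfl⟩

lemma ce_union {X Y : Set ℕ} (hX : CE X) (hY : CE Y) : CE (X ∪ Y) := by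
  obtain ⟨f, hf, rfl⟩ := hX
  obtain ⟨g, hg, rfl⟩ := hY
  obtain ⟨k, hk, H⟩ := Partrec.merge' hf hg
  exact ⟨k, hk, by ext x; exact ((H x).2).symm⟩

lemma primrec_mem_list (l : List ℕ) : Primrec fun x => decide (x ∈ l) := by
  induction l with
  | nil => simpa using Primrec.const false
  | cons h t ih =>
      have : Primrec fun x => ((x = h : Bool) || decide (x ∈ t)) := by
        have h1 : Primrec fun x : ℕ => decide (x = h) := (Primrec.eq.comp .id (.const h)).decide
        exact Primrec.cond h1 (.const true) ih
      exact this.of_eq fun x => by by_cases hx : x = h <;> simp [hx]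

lemma ce_finite {A : Set ℕ} (hA : A.Finite) : CE A := by
  obtain ⟨l, hl⟩ : ∃ l : List ℕ, ∀ x, x ∈ A ↔ x ∈ l :=
    ⟨hA.toFinset.toList, fun x => by simp⟩
  have : CE {x | ∃ _s : ℕ, decide (x ∈ l) = true} :=
    ce_of_exists ((primrec_mem_list l).comp .fst).to_comp.to₂
  convert this using 1
  ext x; simp [hl]

lemma evaln_isSome_iff {c : Code} {x : ℕ} :
    (∃ s, (evaln s c x).isSome = true) ↔ (eval c x).Dom := by
  rw [Part.dom_iff_mem]
  constructor
  · rintro ⟨s, hs⟩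
    obtain ⟨y, hy⟩ := Option.isSome_iff_exists.1 hs
    exact ⟨y, evaln_sound hy⟩
  · rintro ⟨y, hy⟩
    obtain ⟨s, hs⟩ := evaln_complete.1 hy
    exact ⟨s, by rw [hs]; rfl⟩

lemma comp_evaln {c : Code} : Computable₂ fun (x s : ℕ) => (evaln s c x).isSome :=
  (Primrec.option_isSome.comp
    (primrec_evaln.comp (((Primrec.snd).pair (Primrec.const c)).pair Primrec.fst))).to_comp
/-- trivial case: B computable -/
lemma stmt10_of_computable (B : Set ℕ) (hB : CE B) (hc : ComputablePred (· ∈ B)) :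
    ∃ Bseq : ℕ → Set ℕ, UniformlyCE Bseq ∧
      (∀ j k : ℕ, j ≠ k → Bseq j ∩ Bseq k = ∅) ∧
      (⋃ k : ℕ, Bseq k) = B ∧
      (∀ W : Set ℕ, CE W → ∀ k : ℕ, ¬ CE (W \ B) → ¬ CE (W \ Bseq k)) := by
  obtain ⟨cB, hcB⟩ := CE_iff_code.1 hB
  obtain ⟨inst, hdec⟩ := hc
  refine ⟨fun k => if k = 0 then B else ∅, ?_, ?_, ?_, ?_⟩
  · -- uniformly c.e.
    have hp : Computable₂ fun (p : ℕ × ℕ) (s : ℕ) =>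
        ((p.1 = 0 : Bool) && (evaln s cB p.2).isSome) := by
      have h1 : Computable fun q : (ℕ × ℕ) × ℕ => decide (q.1.1 = 0) :=
        (Primrec.eq.comp (Primrec.fst.comp .fst) (.const 0)).decide.to_comp
      have h2 : Computable fun q : (ℕ × ℕ) × ℕ => (evaln q.2 cB q.1.2).isSome :=
        comp_evaln.comp (Computable.snd.comp .fst) .snd
      exact (h1.cond h2 (Computable.const false)).of_eq fun q => by
        cases h : decide (q.1.1 = 0) <;> simp [h]
    obtain ⟨f, hf, hdom⟩ := ce_dom hp
    refine ⟨f, hf, fun p => ?_⟩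
    rw [hdom]
    by_cases h : p.1 = 0 <;> simp [h, hcB, ← evaln_isSome_iff]
  · intro j k hjk
    rcases Nat.eq_zero_or_pos j with rfl | hj
    · simp [hjk.symm]
    · simp [Nat.pos_iff_ne_zero.1 hj]
  · ext x
    simp only [Set.mem_iUnion]
    constructor
    · rintro ⟨k, hk⟩; by_cases h : k = 0 <;> simp_all
    · intro hx; exact ⟨0, by simpa⟩
  · intro W hW k hWB
    exfalso
    apply hWB
    obtain ⟨cW, rfl⟩ := CE_iff_code.1 hW
    have : CE {x | ∃ s, ((evaln s cW x).isSome && !(decide (x ∈ B))) = true} := by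
      apply ce_of_exists
      have h2 : Computable fun q : ℕ × ℕ => !(decide (q.1 ∈ B)) :=
        (Primrec.not.to_comp.comp (hdec.comp .fst))
      exact ((comp_evaln (c := cW)).cond h2 (Computable.const false)).of_eq fun q => by
        cases h : (evaln q.2 cW q.1).isSome <;> simp [h]
    convert this using 1
    ext x
    simp only [Set.mem_diff, Set.mem_setOf_eq, Bool.and_eq_true, Bool.not_eq_true',
      decide_eq_false_iff_not]
    rw [← evaln_isSome_iff]
    constructor
    · rintro ⟨⟨s, hs⟩, hxB⟩; exact ⟨s, hs, by simpa using hxB⟩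
    · rintro ⟨s, hs, hxB⟩; exact ⟨⟨s, hs⟩, by simpa using hxB⟩


namespace Fried

/-- enumeration of A = dom (eval cA), with default x₀ -/
def aenum (cA : Code) (x₀ : ℕ) (p : ℕ) : ℕ :=
  if (evaln p.unpair.2 cA p.unpair.1).isSome then p.unpair.1 else x₀

/-- x has not appeared among a 0, ..., a (s-1) -/
def noHit (cA : Code) (x₀ : ℕ) (x s : ℕ) : Bool :=
  decide ((((List.range s).filterMap fun t =>
    if aenum cA x₀ t = x then some t else none).length) = 0)

def elig (x s n : ℕ) : Bool :=
  (evaln s (Denumerable.ofNat Code n.unpair.1.unpair.1) x).isSome &&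
  (evaln s (Denumerable.ofNat Code n.unpair.1.unpair.2) x).isSome

def notMem (h : List ℕ) (m : ℕ) : Bool :=
  decide (((h.filterMap fun y => if y = m then some y else none).length) = 0)

def cands (x s : ℕ) (h : List ℕ) : List ℕ :=
  (List.range (s+1)).filter fun m => notMem h m && elig x s m

def step (cA : Code) (x₀ : ℕ) (s : ℕ) (h : List ℕ) : List ℕ :=
  bif noHit cA x₀ (aenum cA x₀ s) s then
    ((cands (aenum cA x₀ s) s h).head?).casesOn h (fun m => m :: h)
  else h

def hist (cA : Code) (x₀ : ℕ) (n : ℕ) : List ℕ :=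
  Nat.rec [] (fun s ih => step cA x₀ s ih) n

def color (cA : Code) (x₀ : ℕ) (s : ℕ) : ℕ :=
  ((cands (aenum cA x₀ s) s (hist cA x₀ s)).head?).casesOn 0 (fun m => m.unpair.2)

def isEntry (cA : Code) (x₀ : ℕ) (x s : ℕ) : Bool :=
  (aenum cA x₀ s == x) && noHit cA x₀ x s

def piece (cA : Code) (x₀ : ℕ) (k : ℕ) : Set ℕ :=
  {x | ∃ s, (isEntry cA x₀ x s && (color cA x₀ s == k)) = true}

section Math
variable (cA : Code) (x₀ : ℕ)

lemma noHit_iff {x s : ℕ} : noHit cA x₀ x s = true ↔ ∀ t < s, aenum cA x₀ t ≠ x := by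
  simp only [noHit, decide_eq_true_eq, List.length_eq_zero_iff, List.filterMap_eq_nil_iff,
    List.mem_range]
  constructor
  · intro H t ht he
    exact absurd (H t ht) (by simp [he])
  · intro H t ht
    simp [H t ht]

lemma notMem_iff {h : List ℕ} {m : ℕ} : notMem h m = true ↔ m ∉ h := by
  simp only [notMem, decide_eq_true_eq, List.length_eq_zero_iff, List.filterMap_eq_nil_iff]
  constructor
  · intro H hm
    exact absurd (H m hm) (by simp)
  · intro H y hy
    have : y ≠ m := fun e => H (e ▸ hy)
    simp [this]

lemma isEntry_iff {x s : ℕ} : isEntry cA x₀ x s = true ↔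
    aenum cA x₀ s = x ∧ ∀ t < s, aenum cA x₀ t ≠ x := by
  simp [isEntry, noHit_iff]

lemma isEntry_unique {x s s' : ℕ} (h : isEntry cA x₀ x s = true)
    (h' : isEntry cA x₀ x s' = true) : s = s' := by
  rw [isEntry_iff] at h h'
  rcases lt_trichotomy s s' with hlt | he | hlt
  · exact absurd (h'.2 s hlt h.1) (by simp)
  · exact he
  · exact absurd (h.2 s' hlt h'.1) (by simp)

lemma range_aenum (hx₀ : (eval cA x₀).Dom) :
    Set.range (aenum cA x₀) = {x | (eval cA x).Dom} := by
  ext x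
  constructor
  · rintro ⟨p, rfl⟩
    unfold aenum
    split_ifs with h
    · obtain ⟨y, hy⟩ := Option.isSome_iff_exists.1 h
      exact Part.dom_iff_mem.2 ⟨y, evaln_sound hy⟩
    · exact hx₀
  · intro hx
    obtain ⟨y, hy⟩ := Part.dom_iff_mem.1 hx
    obtain ⟨s, hs⟩ := evaln_complete.1 hy
    refine ⟨Nat.pair x s, ?_⟩
    unfold aenum
    rw [Nat.unpair_pair]
    have : (evaln s cA x).isSome = true := by rw [hs]; rfl
    simp [this]

lemma mem_iff_entry (hx₀ : (eval cA x₀).Dom) {x : ℕ} :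
    (eval cA x).Dom ↔ ∃ s, isEntry cA x₀ x s = true := by
  constructor
  · intro hx
    have : x ∈ Set.range (aenum cA x₀) := by rw [range_aenum cA x₀ hx₀]; exact hx
    obtain ⟨p, hp⟩ := this
    have hex : ∃ s, aenum cA x₀ s = x := ⟨p, hp⟩
    classical
    refine ⟨Nat.find hex, ?_⟩
    rw [isEntry_iff]
    exact ⟨Nat.find_spec hex, fun t ht => Nat.find_min hex ht⟩
  · rintro ⟨s, hs⟩
    rw [isEntry_iff] at hs
    have : x ∈ Set.range (aenum cA x₀) := ⟨s, hs.1⟩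
    rw [range_aenum cA x₀ hx₀] at this
    exact this

def acts (m s : ℕ) : Prop := m ∈ hist cA x₀ (s+1) ∧ m ∉ hist cA x₀ s

lemma mem_cands {x s : ℕ} {h : List ℕ} {m : ℕ} :
    m ∈ cands x s h ↔ m ≤ s ∧ m ∉ h ∧ elig x s m = true := by
  simp only [cands, List.mem_filter, List.mem_range, Bool.and_eq_true, notMem_iff,
    Nat.lt_succ_iff]

lemma cands_sorted {x s : ℕ} {h : List ℕ} : (cands x s h).Pairwise (· < ·) :=
  List.pairwise_lt_range.filter _

lemma head?_le {x s : ℕ} {h : List ℕ} {m m' : ℕ} (hm : (cands x s h).head? = some m)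
    (hm' : m' ∈ cands x s h) : m ≤ m' := by
  have hs := cands_sorted (x := x) (s := s) (h := h)
  rcases hl : cands x s h with _ | ⟨b, t⟩
  · rw [hl] at hm'; simp at hm'
  · rw [hl] at hm hm' hs
    simp only [List.head?_cons, Option.some_inj] at hm
    subst hm
    rcases List.mem_cons.1 hm' with rfl | hmem
    · exact le_rfl
    · exact le_of_lt (List.rel_of_pairwise_cons hs hmem)

lemma head?_mem_cands {x s : ℕ} {h : List ℕ} {m : ℕ} (hm : (cands x s h).head? = some m) :
    m ∈ cands x s h := by
  rcases hl : cands x s h with _ | ⟨b, t⟩ <;> rw [hl] at hm <;> simp_all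

lemma hist_succ (s : ℕ) : hist cA x₀ (s+1) = step cA x₀ s (hist cA x₀ s) := rfl

lemma hist_sub (s : ℕ) : hist cA x₀ s ⊆ hist cA x₀ (s+1) := by
  rw [hist_succ]
  unfold step
  cases noHit cA x₀ (aenum cA x₀ s) s
  · simp
  · rcases (cands (aenum cA x₀ s) s (hist cA x₀ s)).head? with _ | m
    · simp
    · simp only [cond_true]
      exact List.subset_cons_self _ _

lemma hist_mono {s t : ℕ} (hst : s ≤ t) : hist cA x₀ s ⊆ hist cA x₀ t := by
  induction t with
  | zero => exact Nat.le_zero.1 hst ▸ List.Subset.refl _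
  | succ t ih =>
      rcases Nat.lt_or_ge s (t+1) with hlt | hge
      · exact List.Subset.trans (ih (Nat.lt_succ_iff.1 hlt)) (hist_sub cA x₀ t)
      · exact Nat.le_antisymm hst hge ▸ List.Subset.refl _

lemma acts_spec {m s : ℕ} (h : acts cA x₀ m s) :
    noHit cA x₀ (aenum cA x₀ s) s = true ∧
    (cands (aenum cA x₀ s) s (hist cA x₀ s)).head? = some m := by
  obtain ⟨h1, h2⟩ := h
  rw [hist_succ] at h1
  unfold step at h1
  rcases hno : noHit cA x₀ (aenum cA x₀ s) s with _ | _
  · rw [hno] at h1; exact absurd h1 h2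
  · rw [hno] at h1
    rcases hh : (cands (aenum cA x₀ s) s (hist cA x₀ s)).head? with _ | m'
    · rw [hh] at h1; exact absurd h1 h2
    · rw [hh] at h1
      simp only [cond_true] at h1
      have hmm : m = m' := by
        rcases List.mem_cons.1 h1 with h | h
        · exact h
        · exact absurd h h2
      subst hmm
      exact ⟨rfl, rfl⟩

lemma acts_of {m s : ℕ} (hno : noHit cA x₀ (aenum cA x₀ s) s = true)
    (hh : (cands (aenum cA x₀ s) s (hist cA x₀ s)).head? = some m) :
    acts cA x₀ m s := by
  constructor
  · rw [hist_succ]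
    unfold step
    rw [hno, hh]
    simp
  · exact (mem_cands.1 (head?_mem_cands hh)).2.1

lemma acts_once {m s s' : ℕ} (h : acts cA x₀ m s) (h' : acts cA x₀ m s') : s = s' := by
  rcases lt_trichotomy s s' with hlt | he | hlt
  · exact absurd (hist_mono cA x₀ (Nat.succ_le_of_lt hlt) h.1) h'.2
  · exact he
  · exact absurd (hist_mono cA x₀ (Nat.succ_le_of_lt hlt) h'.1) h.2

lemma color_eq {s m : ℕ} (hh : (cands (aenum cA x₀ s) s (hist cA x₀ s)).head? = some m) :
    color cA x₀ s = m.unpair.2 := by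
  unfold color
  rw [hh]

lemma exists_s0 (n : ℕ) : ∃ s₀, n ≤ s₀ ∧ ∀ s, s₀ ≤ s → ∀ m ≤ n, ¬ acts cA x₀ m s := by
  have hfin : {s | ∃ m ≤ n, acts cA x₀ m s}.Finite := by
    have : {s | ∃ m ≤ n, acts cA x₀ m s} ⊆
        ⋃ m ∈ Finset.range (n+1), {s | acts cA x₀ m s} := by
      rintro s ⟨m, hm, hacts⟩
      exact Set.mem_biUnion (Finset.mem_range.2 (Nat.lt_succ_of_le hm)) hacts
    refine Set.Finite.subset (Set.Finite.biUnion (Finset.range (n+1)).finite_toSet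
      fun m _ => ?_) this
    exact Set.Subsingleton.finite fun s hs s' hs' => acts_once cA x₀ hs hs'
  obtain ⟨b, hb⟩ := hfin.bddAbove
  refine ⟨max n (b+1), le_max_left _ _, fun s hs m hm hacts => ?_⟩
  have : s ≤ b := hb ⟨m, hm, hacts⟩
  have : b + 1 ≤ s := le_trans (le_max_right n (b+1)) hs
  omega

end Math

section Comp
variable (cA : Code) (x₀ : ℕ)

lemma filter_eq_filterMap (p : ℕ → Bool) (l : List ℕ) :
    l.filter p = l.filterMap fun m => bif p m then some m else none := by
  induction l with
  | nil => rfl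
  | cons a t ih =>
      cases h : p a <;> simp [List.filter_cons, List.filterMap_cons, h, ih]

lemma primrec_aenum : Primrec (aenum cA x₀) := by
  have h1 : Primrec fun p : ℕ => (evaln p.unpair.2 cA p.unpair.1).isSome :=
    Primrec.option_isSome.comp (primrec_evaln.comp
      (((Primrec.snd.comp .unpair).pair (Primrec.const cA)).pair (Primrec.fst.comp .unpair)))
  have := Primrec.cond h1 (Primrec.fst.comp .unpair) (Primrec.const x₀)
  exact this.of_eq fun p => by
    unfold aenum
    cases h : (evaln p.unpair.2 cA p.unpair.1).isSome <;> simp [h]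

lemma primrec_noHit : Primrec₂ (noHit cA x₀) := by
  have hg : Primrec₂ fun (q : ℕ × ℕ) (t : ℕ) =>
      if aenum cA x₀ t = q.1 then some t else none := by
    refine Primrec.ite ?_ (Primrec.option_some.comp .snd) (Primrec.const none)
    exact Primrec.eq.comp ((primrec_aenum cA x₀).comp .snd) (Primrec.fst.comp .fst)
  have hl : Primrec fun q : ℕ × ℕ =>
      ((List.range q.2).filterMap fun t => if aenum cA x₀ t = q.1 then some t else none) :=
    Primrec.listFilterMap (Primrec.list_range.comp .snd) hg
  exact (Primrec.eq.comp (Primrec.list_length.comp hl) (Primrec.const 0)).decide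

lemma primrec_elig : Primrec₂ fun (q : ℕ × ℕ) (m : ℕ) => elig q.1 q.2 m := by
  have code1 : Primrec fun (p : (ℕ × ℕ) × ℕ) =>
      (evaln p.1.2 (Denumerable.ofNat Code p.2.unpair.1.unpair.1) p.1.1).isSome :=
    Primrec.option_isSome.comp (primrec_evaln.comp
      (((Primrec.snd.comp .fst).pair ((Primrec.ofNat Code).comp
        (Primrec.fst.comp (Primrec.unpair.comp (Primrec.fst.comp (Primrec.unpair.comp .snd)))))).pair
        (Primrec.fst.comp .fst)))
  have code2 : Primrec fun (p : (ℕ × ℕ) × ℕ) =>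
      (evaln p.1.2 (Denumerable.ofNat Code p.2.unpair.1.unpair.2) p.1.1).isSome :=
    Primrec.option_isSome.comp (primrec_evaln.comp
      (((Primrec.snd.comp .fst).pair ((Primrec.ofNat Code).comp
        (Primrec.snd.comp (Primrec.unpair.comp (Primrec.fst.comp (Primrec.unpair.comp .snd)))))).pair
        (Primrec.fst.comp .fst)))
  have := Primrec.cond code1 code2 (Primrec.const false)
  exact this.of_eq fun p => by
    unfold elig
    cases h : (evaln p.1.2 (Denumerable.ofNat Code p.2.unpair.1.unpair.1) p.1.1).isSome <;>
      simp [h]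

lemma primrec_notMem : Primrec₂ notMem := by
  have hg : Primrec₂ fun (q : List ℕ × ℕ) (y : ℕ) =>
      if y = q.2 then some y else none := by
    refine Primrec.ite ?_ (Primrec.option_some.comp .snd) (Primrec.const none)
    exact Primrec.eq.comp .snd (Primrec.snd.comp .fst)
  have hl : Primrec fun q : List ℕ × ℕ =>
      (q.1.filterMap fun y => if y = q.2 then some y else none) :=
    Primrec.listFilterMap .fst hg
  exact (Primrec.eq.comp (Primrec.list_length.comp hl) (Primrec.const 0)).decide

lemma primrec_cands : Primrec fun q : (ℕ × ℕ) × List ℕ => cands q.1.1 q.1.2 q.2 := by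
  have hg : Primrec₂ fun (q : (ℕ × ℕ) × List ℕ) (m : ℕ) =>
      bif notMem q.2 m && elig q.1.1 q.1.2 m then some m else none := by
    have hb : Primrec₂ fun (q : (ℕ × ℕ) × List ℕ) (m : ℕ) =>
        (notMem q.2 m && elig q.1.1 q.1.2 m) := by
      have h1 : Primrec fun p : ((ℕ × ℕ) × List ℕ) × ℕ => notMem p.1.2 p.2 :=
        primrec_notMem.comp (Primrec.snd.comp .fst) .snd
      have h2 : Primrec fun p : ((ℕ × ℕ) × List ℕ) × ℕ => elig p.1.1.1 p.1.1.2 p.2 :=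
        primrec_elig.comp (Primrec.fst.comp .fst) .snd
      have := Primrec.cond h1 h2 (Primrec.const false)
      exact this.of_eq fun p => by cases h : notMem p.1.2 p.2 <;> simp [h]
    exact Primrec.cond hb (Primrec.option_some.comp .snd) (Primrec.const none)
  have : Primrec fun q : (ℕ × ℕ) × List ℕ =>
      ((List.range (q.1.2 + 1)).filterMap fun m =>
        bif notMem q.2 m && elig q.1.1 q.1.2 m then some m else none) :=
    Primrec.listFilterMap (Primrec.list_range.comp (Primrec.succ.comp (Primrec.snd.comp .fst))) hg
  exact this.of_eq fun q => (filter_eq_filterMap _ _).symm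

lemma primrec_step : Primrec₂ (step cA x₀) := by
  have hcnd : Primrec fun q : ℕ × List ℕ => noHit cA x₀ (aenum cA x₀ q.1) q.1 :=
    (primrec_noHit cA x₀).comp ((primrec_aenum cA x₀).comp .fst) .fst
  have hhd : Primrec fun q : ℕ × List ℕ => (cands (aenum cA x₀ q.1) q.1 q.2).head? :=
    Primrec.list_head?.comp ((primrec_cands).comp
      ((((primrec_aenum cA x₀).comp .fst).pair .fst).pair .snd))
  have hsome : Primrec fun q : ℕ × List ℕ =>
      (Option.casesOn ((cands (aenum cA x₀ q.1) q.1 q.2).head?) q.2 (fun m => m :: q.2) :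
        List ℕ) :=
    Primrec.option_casesOn hhd .snd
      ((Primrec.list_cons.comp .snd (Primrec.snd.comp .fst)).to₂)
  exact (Primrec.cond hcnd hsome .snd).of_eq fun q => rfl

lemma primrec_hist : Primrec (hist cA x₀) := by
  have := Primrec.nat_rec₁ ([] : List ℕ) (primrec_step cA x₀)
  exact this.of_eq fun n => rfl

lemma primrec_color : Primrec (color cA x₀) := by
  have hhd : Primrec fun s : ℕ => (cands (aenum cA x₀ s) s (hist cA x₀ s)).head? :=
    Primrec.list_head?.comp (primrec_cands.comp
      ((((primrec_aenum cA x₀)).pair .id).pair (primrec_hist cA x₀)))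
  have : Primrec fun s : ℕ =>
      (Option.casesOn ((cands (aenum cA x₀ s) s (hist cA x₀ s)).head?) 0
        (fun m => m.unpair.2) : ℕ) :=
    Primrec.option_casesOn hhd (Primrec.const 0)
      ((Primrec.snd.comp (Primrec.unpair.comp .snd)).to₂)
  exact this.of_eq fun s => rfl

lemma primrec_isEntry : Primrec₂ (isEntry cA x₀) := by
  have h1 : Primrec fun q : ℕ × ℕ => (aenum cA x₀ q.2 == q.1) :=
    Primrec.beq.comp ((primrec_aenum cA x₀).comp .snd) .fst
  have h2 : Primrec fun q : ℕ × ℕ => noHit cA x₀ q.1 q.2 :=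
    (primrec_noHit cA x₀).comp .fst .snd
  exact (Primrec.cond h1 h2 (Primrec.const false)).of_eq fun q => by
    unfold isEntry
    cases h : (aenum cA x₀ q.2 == q.1) <;> simp [h]

end Comp

section Verify
variable (cA : Code) (x₀ : ℕ)

lemma pband {α} [Primcodable α] {f g : α → Bool} (hf : Primrec f) (hg : Primrec g) :
    Primrec fun a => f a && g a :=
  (Primrec.cond hf hg (Primrec.const false)).of_eq fun a => by cases h : f a <;> simp [h]

lemma piece_subset (hx₀ : (eval cA x₀).Dom) (k : ℕ) :
    piece cA x₀ k ⊆ {x | (eval cA x).Dom} := by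
  rintro x ⟨s, hs⟩
  rw [Bool.and_eq_true] at hs
  exact (mem_iff_entry cA x₀ hx₀).2 ⟨s, hs.1⟩

lemma piece_disjoint {j k : ℕ} (hjk : j ≠ k) : piece cA x₀ j ∩ piece cA x₀ k = ∅ := by
  ext x
  simp only [Set.mem_inter_iff, Set.mem_empty_iff_false, iff_false, not_and]
  rintro ⟨s, hs⟩ ⟨t, ht⟩
  rw [Bool.and_eq_true] at hs ht
  have hst := isEntry_unique cA x₀ hs.1 ht.1
  subst hst
  apply hjk
  have h1 := of_decide_eq_true (by simpa using hs.2)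
  have h2 := of_decide_eq_true (by simpa using ht.2)
  omega

lemma piece_union (hx₀ : (eval cA x₀).Dom) :
    (⋃ k, piece cA x₀ k) = {x | (eval cA x).Dom} := by
  ext x
  simp only [Set.mem_iUnion]
  constructor
  · rintro ⟨k, hk⟩
    exact piece_subset cA x₀ hx₀ k hk
  · intro hx
    obtain ⟨s, hs⟩ := (mem_iff_entry cA x₀ hx₀).1 hx
    refine ⟨color cA x₀ s, s, ?_⟩
    rw [Bool.and_eq_true]
    exact ⟨hs, by simp⟩

lemma elig_pair (ce cc : Code) (k x s : ℕ) :
    elig x s (Nat.pair (Nat.pair (Encodable.encode ce) (Encodable.encode cc)) k) =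
      ((evaln s ce x).isSome && (evaln s cc x).isSome) := by
  unfold elig
  simp [Nat.unpair_pair, Denumerable.ofNat_encode]

lemma uniformly_ce_piece : UniformlyCE (piece cA x₀) := by
  have hp : Computable₂ fun (q : ℕ × ℕ) (s : ℕ) =>
      (isEntry cA x₀ q.2 s && (color cA x₀ s == q.1)) := by
    refine Primrec.to_comp ?_
    exact pband
      ((primrec_isEntry cA x₀).comp (Primrec.snd.comp .fst) .snd)
      (Primrec.beq.comp ((primrec_color cA x₀).comp .snd) (Primrec.fst.comp .fst))
  obtain ⟨f, hf, hdom⟩ := ce_dom hp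
  exact ⟨f, hf, fun q => Iff.symm (hdom q)⟩

lemma main_lemma (hx₀ : (eval cA x₀).Dom) (ce cc : Code) (k : ℕ)
    (hcc : {x | (eval cc x).Dom} = {x | (eval ce x).Dom} \ piece cA x₀ k) :
    CE ({x | (eval ce x).Dom} \ {x | (eval cA x).Dom}) := by
  classical
  set n := Nat.pair (Nat.pair (Encodable.encode ce) (Encodable.encode cc)) k with hn
  have hnk : n.unpair.2 = k := by rw [hn, Nat.unpair_pair]
  have claimA : ∀ s, n ∉ hist cA x₀ s := by
    intro s
    induction s with
    | zero => simp [hist]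
    | succ s ih =>
        intro hmem
        have hacts : acts cA x₀ n s := ⟨hmem, ih⟩
        obtain ⟨hno, hh⟩ := acts_spec cA x₀ hacts
        obtain ⟨-, -, helig⟩ := mem_cands.1 (head?_mem_cands hh)
        rw [hn, elig_pair, Bool.and_eq_true] at helig
        have hdom : (eval cc (aenum cA x₀ s)).Dom := by
          obtain ⟨y, hy⟩ := Option.isSome_iff_exists.1 helig.2
          exact Part.dom_iff_mem.2 ⟨y, evaln_sound hy⟩
        have hnotin : aenum cA x₀ s ∉ piece cA x₀ k := by
          have hmem' : aenum cA x₀ s ∈ {x | (eval cc x).Dom} := hdom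
          rw [hcc] at hmem'
          exact hmem'.2
        apply hnotin
        refine ⟨s, ?_⟩
        rw [Bool.and_eq_true]
        refine ⟨?_, ?_⟩
        · rw [isEntry_iff]
          exact ⟨rfl, (noHit_iff cA x₀).1 hno⟩
        · rw [color_eq cA x₀ hh, hnk]
          simp
  obtain ⟨s₀, hns₀, hs₀⟩ := exists_s0 cA x₀ n
  have claimB : ∀ s, s₀ ≤ s → noHit cA x₀ (aenum cA x₀ s) s = true →
      elig (aenum cA x₀ s) s n = true → False := by
    intro s hs hno helig
    have hcand : n ∈ cands (aenum cA x₀ s) s (hist cA x₀ s) :=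
      mem_cands.2 ⟨le_trans hns₀ hs, claimA s, helig⟩
    rcases hh : (cands (aenum cA x₀ s) s (hist cA x₀ s)).head? with _ | m
    · rw [List.head?_eq_none_iff] at hh
      rw [hh] at hcand
      simp at hcand
    · exact hs₀ s hs m (head?_le hh hcand) (acts_of cA x₀ hno hh)
  set l₀ := (List.range s₀).map (aenum cA x₀) with hl₀
  set p : ℕ → ℕ → Bool := fun x s =>
    (evaln s ce x).isSome &&
      ((evaln s cc x).isSome && (noHit cA x₀ x (s+1) && !(decide (x ∈ l₀)))) with hp
  have hUsub : {x | ∃ s, p x s = true} ⊆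
      {x | (eval ce x).Dom} \ {x | (eval cA x).Dom} := by
    rintro x ⟨s, hs⟩
    simp only [hp, Bool.and_eq_true, Bool.not_eq_true', decide_eq_false_iff_not] at hs
    obtain ⟨h1, h2, h3, h4⟩ := hs
    refine ⟨evaln_isSome_iff.1 ⟨s, h1⟩, ?_⟩
    intro hxA
    obtain ⟨t, ht⟩ := (mem_iff_entry cA x₀ hx₀).1 hxA
    rw [isEntry_iff] at ht
    have hts : s + 1 ≤ t := by
      by_contra hlt
      push_neg at hlt
      exact (noHit_iff cA x₀).1 h3 t hlt ht.1
    have hts₀ : s₀ ≤ t := by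
      by_contra hlt
      push_neg at hlt
      exact h4 (by rw [hl₀]; exact List.mem_map.2 ⟨t, List.mem_range.2 hlt, ht.1⟩)
    apply claimB t hts₀
    · rw [noHit_iff]
      intro u hu
      rw [ht.1]
      exact ht.2 u hu
    · rw [hn, elig_pair, ht.1, Bool.and_eq_true]
      constructor
      · obtain ⟨y, hy⟩ := Option.isSome_iff_exists.1 h1
        exact Option.isSome_iff_exists.2 ⟨y, evaln_mono (le_trans (Nat.le_succ s) hts) hy⟩
      · obtain ⟨y, hy⟩ := Option.isSome_iff_exists.1 h2
        exact Option.isSome_iff_exists.2 ⟨y, evaln_mono (le_trans (Nat.le_succ s) hts) hy⟩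
  have hsup : ∀ x, x ∈ ({x | (eval ce x).Dom} \ {x | (eval cA x).Dom}) →
      x ∉ l₀ → ∃ s, p x s = true := by
    rintro x ⟨hxW, hxA⟩ hxl
    obtain ⟨s₁, h₁⟩ := evaln_isSome_iff.2 hxW
    have hxcc : x ∈ {x | (eval cc x).Dom} := by
      rw [hcc]
      exact ⟨hxW, fun hx => hxA (piece_subset cA x₀ hx₀ k hx)⟩
    obtain ⟨s₂, h₂⟩ := evaln_isSome_iff.2 hxcc
    refine ⟨max s₁ s₂, ?_⟩
    simp only [hp, Bool.and_eq_true, Bool.not_eq_true', decide_eq_false_iff_not]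
    refine ⟨?_, ?_, ?_, hxl⟩
    · obtain ⟨y, hy⟩ := Option.isSome_iff_exists.1 h₁
      exact Option.isSome_iff_exists.2 ⟨y, evaln_mono (le_max_left _ _) hy⟩
    · obtain ⟨y, hy⟩ := Option.isSome_iff_exists.1 h₂
      exact Option.isSome_iff_exists.2 ⟨y, evaln_mono (le_max_right _ _) hy⟩
    · rw [noHit_iff]
      intro t _ hat
      apply hxA
      rw [← hat]
      have : aenum cA x₀ t ∈ Set.range (aenum cA x₀) := ⟨t, rfl⟩
      rw [range_aenum cA x₀ hx₀] at this
      exact this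
  have heq : {x | (eval ce x).Dom} \ {x | (eval cA x).Dom} =
      {x | ∃ s, p x s = true} ∪
        (({x | (eval ce x).Dom} \ {x | (eval cA x).Dom}) ∩ {y | y ∈ l₀}) := by
    apply Set.Subset.antisymm
    · intro x hx
      by_cases hxl : x ∈ l₀
      · exact Or.inr ⟨hx, hxl⟩
      · exact Or.inl (hsup x hx hxl)
    · rintro x (hx | hx)
      · exact hUsub hx
      · exact hx.1
  rw [heq]
  apply ce_union
  · apply ce_of_exists
    refine Primrec.to_comp ?_
    have e1 : Primrec fun q : ℕ × ℕ => (evaln q.2 ce q.1).isSome :=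
      Primrec.option_isSome.comp (primrec_evaln.comp
        ((Primrec.snd.pair (Primrec.const ce)).pair Primrec.fst))
    have e2 : Primrec fun q : ℕ × ℕ => (evaln q.2 cc q.1).isSome :=
      Primrec.option_isSome.comp (primrec_evaln.comp
        ((Primrec.snd.pair (Primrec.const cc)).pair Primrec.fst))
    have e3 : Primrec fun q : ℕ × ℕ => noHit cA x₀ q.1 (q.2+1) :=
      (primrec_noHit cA x₀).comp .fst (Primrec.succ.comp .snd)
    have e4 : Primrec fun q : ℕ × ℕ => !(decide (q.1 ∈ l₀)) :=
      Primrec.not.comp ((primrec_mem_list l₀).comp .fst)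
    exact pband e1 (pband e2 (pband e3 e4))
  · apply ce_finite
    exact Set.Finite.subset (l₀.finite_toSet) Set.inter_subset_right

end Verify

end Fried

/-- For every c.e. set `B` there is a uniformly c.e. sequence
`(B k)` of pairwise disjoint sets with union `B`, such that for every c.e. set `W`
and every `k`: if `W ∖ B` is not c.e., then `W ∖ B k` is not c.e. -/
theorem stmt10 (B : Set ℕ) (hB : CE B) :
    ∃ Bseq : ℕ → Set ℕ, UniformlyCE Bseq ∧
      (∀ j k : ℕ, j ≠ k → Bseq j ∩ Bseq k = ∅) ∧
      (⋃ k : ℕ, Bseq k) = B ∧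
      (∀ W : Set ℕ, CE W → ∀ k : ℕ, ¬ CE (W \ B) → ¬ CE (W \ Bseq k)) := by
  classical
  by_cases hc : ComputablePred (· ∈ B)
  · exact stmt10_of_computable B hB hc
  · obtain ⟨cA, hcA⟩ := CE_iff_code.1 hB
    subst hcA
    have hne : ∃ x₀, (eval cA x₀).Dom := by
      by_contra h
      push_neg at h
      apply hc
      rw [ComputablePred.computable_iff]
      refine ⟨fun _ => false, Computable.const false, ?_⟩
      funext a
      simp only [Set.mem_setOf_eq, Bool.false_eq_true]
      exact eq_false (h a)
    obtain ⟨x₀, hx₀⟩ := hne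
    refine ⟨Fried.piece cA x₀, Fried.uniformly_ce_piece cA x₀,
      fun j k hjk => Fried.piece_disjoint cA x₀ hjk,
      Fried.piece_union cA x₀ hx₀, ?_⟩
    intro W hW k hWB hWBk
    apply hWB
    obtain ⟨ce, hce⟩ := CE_iff_code.1 hW
    subst hce
    obtain ⟨cc, hcc⟩ := CE_iff_code.1 hWBk
    exact Fried.main_lemma cA x₀ hx₀ ce cc k hcc.symm
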